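/- Let $q > 0$ and let $h : [r_0, r_1] \to \mathbb{R}$ be a $C^1$ function with $0 < r_0 < r_1$. If $r_1^{q} |h(r_1)|^2 \leq D_0$, then $\frac{2}{q} r_0^{q} |h(r_0)|^2 + \int_{r_0}^{r_1} r^{q-1} |h(r)|^2 \, dr \leq \frac{4}{q^2} \int_{r_0}^{r_1} r^{q+1} |h'(r)|^2 \, dr + \frac{2}{q} D_0$. -/

import Mathlib

/-- Hardy inequality on an interval, boundary term at the right endpoint (Lemma 3.1 ii). -/
theorem hardy_inequality_right (q r0 r1 D0 : ℝ) (h h' : ℝ → ℝ)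
    (hq : 0 < q) (hr0 : 0 < r0) (hr01 : r0 < r1)
    (hderiv : ∀ r ∈ Set.Icc r0 r1, HasDerivAt h (h' r) r)
    (hcont : ContinuousOn h' (Set.Icc r0 r1))
    (hD0 : r1 ^ q * |h r1| ^ 2 ≤ D0) :
    (2 / q) * (r0 ^ q * |h r0| ^ 2) + ∫ r in r0..r1, r ^ (q - 1) * |h r| ^ 2
      ≤ (4 / q ^ 2) * (∫ r in r0..r1, r ^ (q + 1) * |h' r| ^ 2) + (2 / q) * D0 := by
  have hle : r0 ≤ r1 := hr01.le
  have huIcc : Set.uIcc r0 r1 = Set.Icc r0 r1 := Set.uIcc_of_le hle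
  have hpos : ∀ r ∈ Set.Icc r0 r1, 0 < r := fun r hr => lt_of_lt_of_le hr0 hr.1
  have hhc : ContinuousOn h (Set.Icc r0 r1) := fun r hr =>
    ((hderiv r hr).continuousAt).continuousWithinAt
  -- continuity of integrands
  have hc1 : ContinuousOn (fun r => r ^ (q - 1) * |h r| ^ 2) (Set.Icc r0 r1) := by
    apply ContinuousOn.mul
    · exact fun r hr => (Real.continuousAt_rpow_const r (q - 1)
        (Or.inl (hpos r hr).ne')).continuousWithinAt
    · exact (hhc.abs).pow 2
  have hc2 : ContinuousOn (fun r => r ^ q * (h r * h' r)) (Set.Icc r0 r1) := by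
    apply ContinuousOn.mul
    · exact fun r hr => (Real.continuousAt_rpow_const r q
        (Or.inl (hpos r hr).ne')).continuousWithinAt
    · exact hhc.mul hcont
  have hc3 : ContinuousOn (fun r => r ^ (q + 1) * |h' r| ^ 2) (Set.Icc r0 r1) := by
    apply ContinuousOn.mul
    · exact fun r hr => (Real.continuousAt_rpow_const r (q + 1)
        (Or.inl (hpos r hr).ne')).continuousWithinAt
    · exact (hcont.abs).pow 2
  have hi1 : IntervalIntegrable (fun r => r ^ (q - 1) * |h r| ^ 2) MeasureTheory.volume r0 r1 :=
    (hc1.mono (by rw [huIcc])).intervalIntegrable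
  have hi2 : IntervalIntegrable (fun r => r ^ q * (h r * h' r)) MeasureTheory.volume r0 r1 :=
    (hc2.mono (by rw [huIcc])).intervalIntegrable
  have hi3 : IntervalIntegrable (fun r => r ^ (q + 1) * |h' r| ^ 2) MeasureTheory.volume r0 r1 :=
    (hc3.mono (by rw [huIcc])).intervalIntegrable
  set I1 := ∫ r in r0..r1, r ^ (q - 1) * |h r| ^ 2 with hI1
  set I2 := ∫ r in r0..r1, r ^ q * (h r * h' r) with hI2
  set I3 := ∫ r in r0..r1, r ^ (q + 1) * |h' r| ^ 2 with hI3
  -- FTC for F r = r^q * (h r)^2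
  have hFTC : (∫ r in r0..r1, q * (r ^ (q - 1) * |h r| ^ 2) + 2 * (r ^ q * (h r * h' r)))
      = r1 ^ q * (h r1) ^ 2 - r0 ^ q * (h r0) ^ 2 := by
    have := intervalIntegral.integral_eq_sub_of_hasDerivAt
      (f := fun r => r ^ q * (h r) ^ 2)
      (f' := fun r => q * (r ^ (q - 1) * |h r| ^ 2) + 2 * (r ^ q * (h r * h' r)))
      (a := r0) (b := r1) ?_ ?_
    · exact this
    · intro r hr
      rw [huIcc] at hr
      have hd1 : HasDerivAt (fun r : ℝ => r ^ q) (q * r ^ (q - 1)) r :=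
        Real.hasDerivAt_rpow_const (Or.inl (hpos r hr).ne')
      have hd2 : HasDerivAt (fun r => (h r) ^ 2) (2 * (h r) ^ 1 * h' r) r :=
        (hderiv r hr).pow 2
      have := hd1.mul hd2
      convert this using 1
      · rfl
      · rfl
      simp only [sq_abs]
      ring
    · apply ContinuousOn.intervalIntegrable
      rw [huIcc]
      exact (continuousOn_const.mul hc1).add (continuousOn_const.mul hc2)
  have hsplit : (∫ r in r0..r1, q * (r ^ (q - 1) * |h r| ^ 2) + 2 * (r ^ q * (h r * h' r)))
      = q * I1 + 2 * I2 := by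
    rw [intervalIntegral.integral_add (hi1.const_mul q) (hi2.const_mul 2),
      intervalIntegral.integral_const_mul, intervalIntegral.integral_const_mul]
  -- pointwise AM-GM bound: -2 * (r^q * h h') ≤ q/2 * r^(q-1) h² + 2/q * r^(q+1) h'²
  have hmono : -(2 * I2) ≤ (q / 2) * I1 + (2 / q) * I3 := by
    have : (∫ r in r0..r1, -(2 * (r ^ q * (h r * h' r))))
        ≤ ∫ r in r0..r1, (q / 2) * (r ^ (q - 1) * |h r| ^ 2)
          + (2 / q) * (r ^ (q + 1) * |h' r| ^ 2) := by
      apply intervalIntegral.integral_mono_on hle ((hi2.const_mul 2).neg)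
        ((hi1.const_mul (q / 2)).add (hi3.const_mul (2 / q)))
      intro r hr
      have hrpos := hpos r hr
      set a := Real.sqrt (q / 2) * r ^ ((q - 1) / 2) * h r with ha
      set b := Real.sqrt (2 / q) * r ^ ((q + 1) / 2) * h' r with hb
      have hab : a * b = r ^ q * (h r * h' r) := by
        have hs : Real.sqrt (q / 2) * Real.sqrt (2 / q) = 1 := by
          rw [← Real.sqrt_mul (by positivity)]
          rw [show q / 2 * (2 / q) = 1 by field_simp]
          exact Real.sqrt_one
        have hrr : r ^ ((q - 1) / 2) * r ^ ((q + 1) / 2) = r ^ q := by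
          rw [← Real.rpow_add hrpos]; ring_nf
        calc a * b = (Real.sqrt (q / 2) * Real.sqrt (2 / q)) *
              (r ^ ((q - 1) / 2) * r ^ ((q + 1) / 2)) * (h r * h' r) := by ring
          _ = r ^ q * (h r * h' r) := by rw [hs, hrr]; ring
      have ha2 : a ^ 2 = (q / 2) * (r ^ (q - 1) * |h r| ^ 2) := by
        rw [ha, mul_pow, mul_pow, Real.sq_sqrt (by positivity),
          ← Real.rpow_natCast (r ^ ((q - 1) / 2)) 2, ← Real.rpow_mul hrpos.le, sq_abs]
        norm_num
        ring
      have hb2 : b ^ 2 = (2 / q) * (r ^ (q + 1) * |h' r| ^ 2) := by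
        rw [hb, mul_pow, mul_pow, Real.sq_sqrt (by positivity),
          ← Real.rpow_natCast (r ^ ((q + 1) / 2)) 2, ← Real.rpow_mul hrpos.le, sq_abs]
        norm_num
        ring
      simp only [Pi.neg_apply]
      nlinarith [sq_nonneg (a + b)]
    rw [intervalIntegral.integral_neg, intervalIntegral.integral_const_mul,
      intervalIntegral.integral_add (hi1.const_mul (q / 2)) (hi3.const_mul (2 / q)),
      intervalIntegral.integral_const_mul, intervalIntegral.integral_const_mul] at this
    linarith
  rw [hsplit] at hFTC
  have hsq1 : (h r1) ^ 2 = |h r1| ^ 2 := (sq_abs _).symm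
  have hsq0 : (h r0) ^ 2 = |h r0| ^ 2 := (sq_abs _).symm
  rw [hsq1, hsq0] at hFTC
  have hr0q : (0 : ℝ) ≤ r0 ^ q * |h r0| ^ 2 := by positivity
  have hq2 : (0 : ℝ) < q ^ 2 := by positivity
  -- q I1 + 2 I2 = B1 - B0, -(2 I2) ≤ q/2 I1 + 2/q I3, B1 ≤ D0
  -- goal: 2/q B0 + I1 ≤ 4/q² I3 + 2/q D0
  have key : (q / 2) * I1 + r0 ^ q * |h r0| ^ 2 ≤ D0 + (2 / q) * I3 := by
    nlinarith
  have h1 : (2 / q) * ((q / 2) * I1 + r0 ^ q * |h r0| ^ 2)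
      ≤ (2 / q) * (D0 + (2 / q) * I3) := by
    apply mul_le_mul_of_nonneg_left key (by positivity)
  calc (2 / q) * (r0 ^ q * |h r0| ^ 2) + I1
      = (2 / q) * ((q / 2) * I1 + r0 ^ q * |h r0| ^ 2) := by field_simp; ring
    _ ≤ (2 / q) * (D0 + (2 / q) * I3) := h1
    _ = (4 / q ^ 2) * I3 + (2 / q) * D0 := by field_simp; ring
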